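/- Let A ∈ M_N(ℂ) and 0 < γ < 1, and set X = exp_∘(iγA). Then (1/N) Σ_{k=2}^N | σ_k(X/γ) − σ_k(A) | ≤ γ exp(‖A‖) + 2‖A‖/N. -/

import Mathlib

open Matrix Finset
open scoped Matrix.Norms.L2Operator ComplexInnerProductSpace

open Matrix

/-- The decreasingly ordered eigenvalues of the Hermitian matrix `A * Aᴴ`. -/
noncomputable def evalsDesc {N : ℕ} (A : Matrix (Fin N) (Fin N) ℂ) : Fin N → ℝ :=
  fun k =>
    (Matrix.isHermitian_mul_conjTranspose_self A).eigenvalues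
      (Tuple.sort (fun i => -(Matrix.isHermitian_mul_conjTranspose_self A).eigenvalues i) k)

/-- The decreasingly ordered singular values `σ_1(A) ≥ ⋯ ≥ σ_N(A)` of a complex matrix `A`,
i.e. the decreasingly ordered nonnegative square roots of the eigenvalues of `A * Aᴴ`.
Here `svalsDesc A k` is `σ_{k+1}(A)` (indices are 0-based). -/
noncomputable def svalsDesc {N : ℕ} (A : Matrix (Fin N) (Fin N) ℂ) : Fin N → ℝ :=
  fun k => Real.sqrt (evalsDesc A k)

/-- The operator norm (largest singular value) of a complex matrix, realized as the norm of
the induced linear operator on Euclidean space. -/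
noncomputable def opNorm {m n : ℕ} (A : Matrix (Fin m) (Fin n) ℂ) : ℝ :=
  ‖LinearMap.toContinuousLinearMap (Matrix.toEuclideanLin A)‖

/-- The entrywise exponential of a complex matrix. -/
noncomputable def entrywiseExp {m n : ℕ} (A : Matrix (Fin m) (Fin n) ℂ) :
    Matrix (Fin m) (Fin n) ℂ :=
  Matrix.of fun k l => Complex.exp (A k l)

/-- The `N × N` all-ones matrix. -/
def allOnes (N : ℕ) : Matrix (Fin N) (Fin N) ℂ :=
  Matrix.of fun _ _ => (1 : ℂ)



variable {N : ℕ}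

noncomputable def toE {N : ℕ} (v : Fin N → ℂ) : EuclideanSpace ℂ (Fin N) :=
  (WithLp.equiv 2 _).symm v

lemma normE_sq (x : EuclideanSpace ℂ (Fin N)) : ‖x‖ ^ 2 = ∑ i, ‖x i‖ ^ 2 := by
  rw [EuclideanSpace.norm_eq, Real.sq_sqrt]
  exact Finset.sum_nonneg fun i _ => sq_nonneg _

lemma euclid_inner_apply (x y : EuclideanSpace ℂ (Fin N)) :
    ⟪x, y⟫ = ∑ i, (starRingEnd ℂ) (x i) * y i := by
  simp [PiLp.inner_apply, RCLike.inner_apply, mul_comm]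

lemma inner_mulVec_left (C : Matrix (Fin N) (Fin N) ℂ) (x y : EuclideanSpace ℂ (Fin N)) :
    ⟪toE (Cᴴ *ᵥ x), y⟫ = ⟪x, toE (C *ᵥ y)⟫ := by
  simp only [euclid_inner_apply, toE, WithLp.equiv_symm_apply, PiLp.toLp_apply, mulVec, dotProduct,
    conjTranspose_apply, map_sum, starRingEnd_apply, star_star, star_mul']
  simp_rw [Finset.sum_mul, Finset.mul_sum]
  rw [Finset.sum_comm]
  refine Finset.sum_congr rfl fun i _ => Finset.sum_congr rfl fun j _ => by ring

lemma norm_sq_mulVec_conjTranspose (C : Matrix (Fin N) (Fin N) ℂ) (x : EuclideanSpace ℂ (Fin N)) :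
    ‖toE (Cᴴ *ᵥ x)‖ ^ 2 = Complex.re ⟪x, toE ((C * Cᴴ) *ᵥ x)⟫ := by
  have h := inner_mulVec_left C x (toE (Cᴴ *ᵥ x))
  have e : C *ᵥ (toE (Cᴴ *ᵥ x) : Fin N → ℂ) = (C * Cᴴ) *ᵥ x := by
    rw [show (toE (Cᴴ *ᵥ x) : Fin N → ℂ) = Cᴴ *ᵥ x from rfl, Matrix.mulVec_mulVec]
  rw [e] at h
  rw [← h, ← inner_self_eq_norm_sq (𝕜 := ℂ)]
  rfl

lemma opNorm_le_bound (M : Matrix (Fin N) (Fin N) ℂ) {c : ℝ} (hc : 0 ≤ c)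
    (h : ∀ x : EuclideanSpace ℂ (Fin N), ‖toE (M *ᵥ x)‖ ≤ c * ‖x‖) : ‖M‖ ≤ c := by
  rw [Matrix.l2_opNorm_def]
  exact ContinuousLinearMap.opNorm_le_bound _ hc h

lemma norm_mulVec_le (M : Matrix (Fin N) (Fin N) ℂ) (x : EuclideanSpace ℂ (Fin N)) :
    ‖toE (M *ᵥ x)‖ ≤ ‖M‖ * ‖x‖ :=
  M.l2_opNorm_mulVec x

lemma norm_mulVec_conjTranspose_le (M : Matrix (Fin N) (Fin N) ℂ) (x : EuclideanSpace ℂ (Fin N)) :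
    ‖toE (Mᴴ *ᵥ x)‖ ≤ ‖M‖ * ‖x‖ := by
  have := norm_mulVec_le Mᴴ x
  rwa [Matrix.l2_opNorm_conjTranspose] at this

lemma col_sq_le (M : Matrix (Fin N) (Fin N) ℂ) (l : Fin N) :
    ∑ k, ‖M k l‖ ^ 2 ≤ ‖M‖ ^ 2 := by
  have h1 : toE (M *ᵥ (EuclideanSpace.single l 1 : EuclideanSpace ℂ (Fin N))) =
      toE (fun k => M k l) := by
    ext k
    simp [toE, mulVec, dotProduct, EuclideanSpace.single_apply]
  have h2 := norm_mulVec_le M (EuclideanSpace.single l 1)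
  rw [h1, EuclideanSpace.norm_single] at h2
  simp only [norm_one, mul_one] at h2
  calc ∑ k, ‖M k l‖ ^ 2 = ‖toE (fun k => M k l)‖ ^ 2 := by rw [normE_sq]; rfl
    _ ≤ ‖M‖ ^ 2 := by
        apply pow_le_pow_left₀ (norm_nonneg _) h2 2

lemma entry_le (M : Matrix (Fin N) (Fin N) ℂ) (k l : Fin N) : ‖M k l‖ ≤ ‖M‖ := by
  have h : ‖M k l‖ ^ 2 ≤ ‖M‖ ^ 2 := by
    refine le_trans ?_ (col_sq_le M l)
    exact Finset.single_le_sum (fun i _ => sq_nonneg ‖M i l‖) (Finset.mem_univ k)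
  nlinarith [norm_nonneg (M k l), norm_nonneg M]

lemma row_sq_le (M : Matrix (Fin N) (Fin N) ℂ) (k : Fin N) :
    ∑ l, ‖M k l‖ ^ 2 ≤ ‖M‖ ^ 2 := by
  have := col_sq_le Mᴴ k
  rw [Matrix.l2_opNorm_conjTranspose] at this
  simpa [Matrix.conjTranspose_apply] using this

lemma norm_stdBasisMatrix_le (k l : Fin N) (c : ℂ) :
    ‖Matrix.single k l c‖ ≤ ‖c‖ := by
  apply opNorm_le_bound _ (norm_nonneg c)
  intro x
  have hx : ∀ j, ‖x j‖ ≤ ‖x‖ := by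
    intro j
    have h : ‖x j‖ ^ 2 ≤ ‖x‖ ^ 2 := by
      rw [normE_sq]
      exact Finset.single_le_sum (fun i _ => sq_nonneg ‖x i‖) (Finset.mem_univ j)
    nlinarith [norm_nonneg (x j), norm_nonneg x]
  have he : ∀ j, (toE (Matrix.single k l c *ᵥ x)) j = if j = k then c * x l else 0 := by
    intro j
    simp only [toE, WithLp.equiv_symm_apply, PiLp.toLp_apply, mulVec, dotProduct, Matrix.single]
    by_cases h : j = k
    · subst h
      rw [Finset.sum_eq_single l] <;> simp +contextual [of_apply, eq_comm]
    · rw [Finset.sum_eq_zero] <;> simp +contextual [of_apply, h]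
      exact fun hkj => absurd hkj.symm h
  have : ‖toE (Matrix.single k l c *ᵥ x)‖ ^ 2 = ‖c * x l‖ ^ 2 := by
    rw [normE_sq]
    rw [Finset.sum_eq_single k] <;> simp +contextual [he]
  have h2 : ‖toE (Matrix.single k l c *ᵥ x)‖ = ‖c * x l‖ := by
    nlinarith [norm_nonneg (toE (Matrix.single k l c *ᵥ x)), norm_nonneg (c * x l)]
  rw [h2, norm_mul]
  exact mul_le_mul_of_nonneg_left (hx l) (norm_nonneg c)

lemma norm_le_sum_entries (M : Matrix (Fin N) (Fin N) ℂ) :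
    ‖M‖ ≤ ∑ k, ∑ l, ‖M k l‖ := by
  conv_lhs => rw [Matrix.matrix_eq_sum_single M]
  refine le_trans (norm_sum_le _ _) ?_
  refine Finset.sum_le_sum fun k _ => ?_
  refine le_trans (norm_sum_le _ _) ?_
  exact Finset.sum_le_sum fun l _ => norm_stdBasisMatrix_le k l (M k l)

lemma schur_bound (P Q : Matrix (Fin N) (Fin N) ℂ) {r c : ℝ} (hr0 : 0 ≤ r) (hc0 : 0 ≤ c)
    (hP : ∀ k, ∑ l, ‖P k l‖ ^ 2 ≤ r ^ 2) (hQ : ∀ l, ∑ k, ‖Q k l‖ ^ 2 ≤ c ^ 2) :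
    ‖Matrix.of (fun k l => P k l * Q k l)‖ ≤ r * c := by
  apply opNorm_le_bound _ (by positivity)
  intro x
  have key : ‖toE (Matrix.of (fun k l => P k l * Q k l) *ᵥ x)‖ ^ 2
      ≤ (r * c * ‖x‖) ^ 2 := by
    rw [normE_sq]
    have hentry : ∀ k, ‖(toE (Matrix.of (fun k l => P k l * Q k l) *ᵥ x)) k‖ ^ 2
        ≤ r ^ 2 * ∑ l, ‖Q k l‖ ^ 2 * ‖x l‖ ^ 2 := by
      intro k
      have h1 : ‖(toE (Matrix.of (fun k l => P k l * Q k l) *ᵥ x)) k‖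
          ≤ ∑ l, ‖P k l‖ * (‖Q k l‖ * ‖x l‖) := by
        have he : (toE (Matrix.of (fun k l => P k l * Q k l) *ᵥ x)) k
            = ∑ l, P k l * Q k l * x l := by
          simp [toE, mulVec, dotProduct]
        rw [he]
        refine le_trans (norm_sum_le _ _) (Finset.sum_le_sum fun l _ => ?_)
        rw [norm_mul, norm_mul]
        exact le_of_eq (mul_assoc _ _ _)
      have h2 : (∑ l, ‖P k l‖ * (‖Q k l‖ * ‖x l‖)) ^ 2
          ≤ (∑ l, ‖P k l‖ ^ 2) * ∑ l, (‖Q k l‖ * ‖x l‖) ^ 2 :=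
        Finset.sum_mul_sq_le_sq_mul_sq _ _ _
      have h3 : ‖(toE (Matrix.of (fun k l => P k l * Q k l) *ᵥ x)) k‖ ^ 2
          ≤ (∑ l, ‖P k l‖ * (‖Q k l‖ * ‖x l‖)) ^ 2 := by
        apply pow_le_pow_left₀ (norm_nonneg _) h1
      refine h3.trans (h2.trans ?_)
      have h4 : (∑ l, ‖P k l‖ ^ 2) * (∑ l, (‖Q k l‖ * ‖x l‖) ^ 2)
          ≤ r ^ 2 * ∑ l, (‖Q k l‖ * ‖x l‖) ^ 2 := by
        apply mul_le_mul_of_nonneg_right (hP k)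
        exact Finset.sum_nonneg fun l _ => sq_nonneg _
      refine h4.trans (le_of_eq ?_)
      congr 1
      exact Finset.sum_congr rfl fun l _ => (mul_pow _ _ 2)
    calc ∑ k, ‖(toE (Matrix.of (fun k l => P k l * Q k l) *ᵥ x)) k‖ ^ 2
        ≤ ∑ k, r ^ 2 * ∑ l, ‖Q k l‖ ^ 2 * ‖x l‖ ^ 2 := Finset.sum_le_sum fun k _ => hentry k
      _ = r ^ 2 * ∑ l, (∑ k, ‖Q k l‖ ^ 2) * ‖x l‖ ^ 2 := by
          rw [← Finset.mul_sum, Finset.sum_comm]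
          congr 1
          exact Finset.sum_congr rfl fun l _ => (Finset.sum_mul _ _ _).symm
      _ ≤ r ^ 2 * ∑ l, c ^ 2 * ‖x l‖ ^ 2 := by
          refine mul_le_mul_of_nonneg_left (Finset.sum_le_sum fun l _ => ?_) (sq_nonneg r)
          exact mul_le_mul_of_nonneg_right (hQ l) (sq_nonneg _)
      _ = (r * c * ‖x‖) ^ 2 := by
          rw [← Finset.mul_sum, ← normE_sq]
          ring
  nlinarith [norm_nonneg (toE (Matrix.of (fun k l => P k l * Q k l) *ᵥ x)),
    mul_nonneg (mul_nonneg hr0 hc0) (norm_nonneg x)]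


/-- Entrywise (Hadamard) power of a matrix. -/
def hadPow (A : Matrix (Fin N) (Fin N) ℂ) (m : ℕ) : Matrix (Fin N) (Fin N) ℂ :=
  Matrix.of fun k l => (A k l) ^ m

lemma colsq_hadPow (A : Matrix (Fin N) (Fin N) ℂ) (m : ℕ) (l : Fin N) :
    ∑ k, ‖hadPow A (m + 1) k l‖ ^ 2 ≤ (‖A‖ ^ (m + 1)) ^ 2 := by
  have h : ∀ k : Fin N, ‖hadPow A (m + 1) k l‖ ^ 2 ≤ ‖A k l‖ ^ 2 * (‖A‖ ^ m) ^ 2 := by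
    intro k
    have : ‖hadPow A (m + 1) k l‖ = ‖A k l‖ ^ (m + 1) := by
      simp [hadPow, norm_pow]
    rw [this]
    have h2 : ‖A k l‖ ^ m ≤ ‖A‖ ^ m :=
      pow_le_pow_left₀ (norm_nonneg _) (entry_le A k l) m
    calc (‖A k l‖ ^ (m + 1)) ^ 2 = ‖A k l‖ ^ 2 * (‖A k l‖ ^ m) ^ 2 := by ring
      _ ≤ ‖A k l‖ ^ 2 * (‖A‖ ^ m) ^ 2 := by
          refine mul_le_mul_of_nonneg_left ?_ (sq_nonneg _)
          exact pow_le_pow_left₀ (by positivity) h2 2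
  calc ∑ k, ‖hadPow A (m + 1) k l‖ ^ 2 ≤ ∑ k, ‖A k l‖ ^ 2 * (‖A‖ ^ m) ^ 2 :=
        Finset.sum_le_sum fun k _ => h k
    _ = (∑ k, ‖A k l‖ ^ 2) * (‖A‖ ^ m) ^ 2 := (Finset.sum_mul _ _ _).symm
    _ ≤ ‖A‖ ^ 2 * (‖A‖ ^ m) ^ 2 := by
        refine mul_le_mul_of_nonneg_right (col_sq_le A l) (sq_nonneg _)
    _ = (‖A‖ ^ (m + 1)) ^ 2 := by ring

lemma norm_hadPow_le (A : Matrix (Fin N) (Fin N) ℂ) (m : ℕ) :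
    ‖hadPow A (m + 1)‖ ≤ ‖A‖ ^ (m + 1) := by
  cases m with
  | zero =>
    have : hadPow A 1 = A := by ext k l; simp [hadPow]
    rw [this, pow_one]
  | succ j =>
    have : hadPow A (j + 2) = Matrix.of (fun k l => A k l * hadPow A (j + 1) k l) := by
      ext k l
      simp [hadPow, pow_succ, mul_comm]
    rw [this, show ‖A‖ ^ (j + 2) = ‖A‖ * ‖A‖ ^ (j + 1) from by ring]
    exact schur_bound A (hadPow A (j + 1)) (norm_nonneg A) (by positivity)
      (row_sq_le A) (colsq_hadPow A j)

lemma norm_I_mul_gamma (γ : ℝ) (hγ0 : 0 < γ) : ‖Complex.I * (γ : ℂ)‖ = γ := by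
  rw [norm_mul, Complex.norm_I, one_mul, Complex.norm_real, Real.norm_of_nonneg hγ0.le]

lemma series_bound (A : Matrix (Fin N) (Fin N) ℂ) (γ : ℝ) (hγ0 : 0 < γ) (hγ1 : γ < 1) :
    ‖entrywiseExp ((Complex.I * (γ : ℂ)) • A) - allOnes N - (Complex.I * (γ : ℂ)) • A‖
      ≤ γ ^ 2 * Real.exp ‖A‖ := by
  set z : ℂ := Complex.I * (γ : ℂ) with hz
  have hznorm : ‖z‖ = γ := norm_I_mul_gamma γ hγ0
  set P : ℕ → Matrix (Fin N) (Fin N) ℂ :=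
    fun M => ∑ m ∈ Finset.range M, (z ^ m * ((m.factorial : ℂ))⁻¹) • hadPow A m with hP
  set τ : ℕ → ℝ := fun M => ∑ k, ∑ l,
    ‖Complex.exp (z * A k l) - ∑ m ∈ Finset.range M, (z * A k l) ^ m / m.factorial‖ with hτ
  -- entrywise formula
  have hentry : ∀ M k l, (entrywiseExp (z • A) - P M) k l
      = Complex.exp (z * A k l) - ∑ m ∈ Finset.range M, (z * A k l) ^ m / m.factorial := by
    intro M k l
    simp only [Matrix.sub_apply, entrywiseExp, Matrix.of_apply, Matrix.smul_apply, hP,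
      Matrix.sum_apply, smul_eq_mul, hadPow]
    congr 1
    refine Finset.sum_congr rfl fun m _ => ?_
    rw [mul_pow, div_eq_mul_inv]
    ring
  -- the head bound
  have hhead : ∀ M, 2 ≤ M →
      ‖entrywiseExp (z • A) - allOnes N - z • A‖ ≤ τ M + γ ^ 2 * Real.exp ‖A‖ := by
    intro M hM
    have hsplit : (Finset.range 2).sum (fun m => (z ^ m * ((m.factorial : ℂ))⁻¹) • hadPow A m)
        + (Finset.Ico 2 M).sum (fun m => (z ^ m * ((m.factorial : ℂ))⁻¹) • hadPow A m) = P M :=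
      Finset.sum_range_add_sum_Ico _ hM
    have hr2 : (Finset.range 2).sum (fun m => (z ^ m * ((m.factorial : ℂ))⁻¹) • hadPow A m)
        = allOnes N + z • A := by
      rw [Finset.sum_range_succ, Finset.sum_range_one]
      have h0 : hadPow A 0 = allOnes N := by ext k l; simp [hadPow, allOnes]
      have h1 : hadPow A 1 = A := by ext k l; simp [hadPow]
      rw [h0, h1]
      simp
    have hdecomp : entrywiseExp (z • A) - allOnes N - z • A
        = (entrywiseExp (z • A) - P M)
          + (Finset.Ico 2 M).sum (fun m => (z ^ m * ((m.factorial : ℂ))⁻¹) • hadPow A m) := by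
      rw [← hsplit, hr2]
      abel
    rw [hdecomp]
    refine le_trans (norm_add_le _ _) (add_le_add ?_ ?_)
    · -- ‖X - P M‖ ≤ τ M
      refine le_trans (norm_le_sum_entries _) (le_of_eq ?_)
      rw [hτ]
      exact Finset.sum_congr rfl fun k _ => Finset.sum_congr rfl fun l _ => by rw [hentry]
    · -- tail bound
      refine le_trans (norm_sum_le _ _) ?_
      have hterm : ∀ m ∈ Finset.Ico 2 M,
          ‖(z ^ m * ((m.factorial : ℂ))⁻¹) • hadPow A m‖ ≤ γ ^ 2 * (‖A‖ ^ m / m.factorial) := by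
        intro m hm
        obtain ⟨hm2, _⟩ := Finset.mem_Ico.mp hm
        obtain ⟨j, rfl⟩ : ∃ j, m = j + 1 := ⟨m - 1, by omega⟩
        rw [norm_smul, norm_mul, norm_pow, hznorm, norm_inv, Complex.norm_natCast]
        have h1 : ‖hadPow A (j + 1)‖ ≤ ‖A‖ ^ (j + 1) := norm_hadPow_le A j
        have hγm : γ ^ (j + 1) ≤ γ ^ 2 := pow_le_pow_of_le_one hγ0.le hγ1.le (by omega)
        have hfac : (0:ℝ) < (j + 1).factorial := by positivity
        calc γ ^ (j + 1) * ((j + 1).factorial : ℝ)⁻¹ * ‖hadPow A (j + 1)‖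
            ≤ γ ^ 2 * ((j + 1).factorial : ℝ)⁻¹ * ‖A‖ ^ (j + 1) := by
              refine mul_le_mul (mul_le_mul_of_nonneg_right hγm (by positivity)) h1
                (norm_nonneg _) (by positivity)
          _ = γ ^ 2 * (‖A‖ ^ (j + 1) / (j + 1).factorial) := by ring
      refine le_trans (Finset.sum_le_sum hterm) ?_
      rw [← Finset.mul_sum]
      refine mul_le_mul_of_nonneg_left ?_ (by positivity)
      calc ∑ m ∈ Finset.Ico 2 M, ‖A‖ ^ m / m.factorial
          ≤ ∑ m ∈ Finset.range M, ‖A‖ ^ m / m.factorial := by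
            refine Finset.sum_le_sum_of_subset_of_nonneg ?_ (fun m _ _ => by positivity)
            rw [Finset.range_eq_Ico]
            exact Finset.Ico_subset_Ico (by omega) le_rfl
        _ ≤ Real.exp ‖A‖ := Real.sum_le_exp_of_nonneg (norm_nonneg A) M
  -- limit argument
  have htend : Filter.Tendsto (fun M => τ M + γ ^ 2 * Real.exp ‖A‖) Filter.atTop
      (nhds (γ ^ 2 * Real.exp ‖A‖)) := by
    have h0 : Filter.Tendsto τ Filter.atTop (nhds 0) := by
      rw [hτ]
      have : (0:ℝ) = ∑ k : Fin N, ∑ l : Fin N, (0:ℝ) := by simp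
      rw [this]
      refine Filter.Tendsto.congr' (by rfl) (tendsto_finset_sum _ fun k _ =>
        tendsto_finset_sum _ fun l _ => ?_)
      have hs : Filter.Tendsto (fun M => ∑ m ∈ Finset.range M, (z * A k l) ^ m / m.factorial)
          Filter.atTop (nhds (Complex.exp (z * A k l))) := by
        have := (NormedSpace.expSeries_div_hasSum_exp (z * A k l)).tendsto_sum_nat
        rwa [← Complex.exp_eq_exp_ℂ] at this
      have := (tendsto_const_nhds (x := Complex.exp (z * A k l))
        (f := Filter.atTop (α := ℕ))).sub hs
      rw [sub_self] at this
      simpa using this.norm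
    simpa using h0.add tendsto_const_nhds
  refine ge_of_tendsto htend ?_
  filter_upwards [Filter.eventually_ge_atTop 2] with M hM
  exact hhead M hM


section Spectral

variable (C : Matrix (Fin N) (Fin N) ℂ)

/-- abbreviations -/
noncomputable def eb : OrthonormalBasis (Fin N) ℂ (EuclideanSpace ℂ (Fin N)) :=
  (Matrix.isHermitian_mul_conjTranspose_self C).eigenvectorBasis

noncomputable def ev : Fin N → ℝ :=
  (Matrix.isHermitian_mul_conjTranspose_self C).eigenvalues

lemma ev_nonneg (i : Fin N) : 0 ≤ ev C i :=
  Matrix.eigenvalues_self_mul_conjTranspose_nonneg C i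

lemma evalsDesc_eq (k : Fin N) :
    evalsDesc C k = ev C (Tuple.sort (fun i => -(ev C i)) k) := rfl

lemma evalsDesc_nonneg (k : Fin N) : 0 ≤ evalsDesc C k := ev_nonneg C _

lemma svalsDesc_nonneg (k : Fin N) : 0 ≤ svalsDesc C k := Real.sqrt_nonneg _

lemma sq_svalsDesc (k : Fin N) : svalsDesc C k ^ 2 = evalsDesc C k :=
  Real.sq_sqrt (evalsDesc_nonneg C k)

lemma evalsDesc_antitone : ∀ {j k : Fin N}, j ≤ k → evalsDesc C k ≤ evalsDesc C j := by
  intro j k hjk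
  have := Tuple.monotone_sort (fun i => -(ev C i)) hjk
  simpa [evalsDesc_eq, Function.comp, neg_le_neg_iff] using this

lemma svalsDesc_antitone {j k : Fin N} (hjk : j ≤ k) : svalsDesc A k ≤ svalsDesc A j :=
  Real.sqrt_le_sqrt (evalsDesc_antitone A hjk)

/-- the quadratic-form formula -/
lemma quad_eq (x : EuclideanSpace ℂ (Fin N)) :
    ‖toE (Cᴴ *ᵥ x)‖ ^ 2 = ∑ j, ev C j * ‖(eb C).repr x j‖ ^ 2 := by
  rw [norm_sq_mulVec_conjTranspose]
  have hsum := (eb C).sum_inner_mul_inner x (toE ((C * Cᴴ) *ᵥ x))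
  rw [← hsum, Complex.re_sum]
  refine Finset.sum_congr rfl fun j _ => ?_
  have h1 : ⟪eb C j, toE ((C * Cᴴ) *ᵥ x)⟫ = ↑(ev C j) * ⟪eb C j, x⟫ := by
    have h2 := inner_mulVec_left (C * Cᴴ) (eb C j) x
    rw [(Matrix.isHermitian_mul_conjTranspose_self C).eq] at h2
    rw [← h2]
    have h3 : toE ((C * Cᴴ) *ᵥ (eb C j)) = (ev C j : ℂ) • eb C j := by
      have h4 := (Matrix.isHermitian_mul_conjTranspose_self C).mulVec_eigenvectorBasis j
      ext i
      show ((C * Cᴴ) *ᵥ (eb C j)) i = ((ev C j : ℂ) • eb C j) i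
      have h5 : ((C * Cᴴ) *ᵥ (eb C j)) i = (ev C j • ((eb C j : Fin N → ℂ))) i := congrFun h4 i
      rw [h5]
      show ev C j • ((eb C j) i) = (ev C j : ℂ) * ((eb C j) i)
      rw [Complex.real_smul]
    rw [h3, inner_smul_left, Complex.conj_ofReal]
  rw [h1, (eb C).repr_apply_apply]
  have hc : ⟪x, eb C j⟫ = (starRingEnd ℂ) ⟪eb C j, x⟫ := (inner_conj_symm _ _).symm
  rw [hc]
  set c := (⟪eb C j, x⟫ : ℂ)
  have : (starRingEnd ℂ) c * (↑(ev C j) * c) = (ev C j : ℂ) * ((starRingEnd ℂ) c * c) := by ring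
  rw [this, Complex.conj_mul']
  rw [← Complex.ofReal_pow, ← Complex.ofReal_mul, Complex.ofReal_re]

lemma parseval (x : EuclideanSpace ℂ (Fin N)) :
    ‖x‖ ^ 2 = ∑ j, ‖(eb C).repr x j‖ ^ 2 := by
  rw [← normE_sq]
  congr 1
  exact ((eb C).repr.norm_map x).symm

/-- the span-perp subspace attached to a finite index set -/
noncomputable def VS (S : Finset (Fin N)) : Submodule ℂ (EuclideanSpace ℂ (Fin N)) :=
  (Submodule.span ℂ (eb C '' (↑(Sᶜ) : Set (Fin N))))ᗮ

lemma mem_VS_iff (S : Finset (Fin N)) (x : EuclideanSpace ℂ (Fin N)) :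
    x ∈ VS C S ↔ ∀ i ∉ S, ⟪eb C i, x⟫ = 0 := by
  constructor
  · intro hx i hi
    exact hx _ (Submodule.subset_span ⟨i, by simpa using hi, rfl⟩)
  · intro h u hu
    have hsub : (eb C '' (↑(Sᶜ) : Set (Fin N))) ⊆ ((Submodule.span ℂ {x})ᗮ : Set _) := by
      rintro _ ⟨i, hi, rfl⟩
      rw [SetLike.mem_coe, Submodule.mem_orthogonal]
      intro v hv
      rw [Submodule.mem_span_singleton] at hv
      obtain ⟨a, rfl⟩ := hv
      have hxi : (⟪x, eb C i⟫ : ℂ) = 0 := by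
        rw [← inner_conj_symm, h i (by simpa using hi), map_zero]
      rw [inner_smul_left, hxi, mul_zero]
    have hmem := Submodule.span_le.mpr hsub hu
    rw [Submodule.mem_orthogonal] at hmem
    have h2 := hmem x (Submodule.mem_span_singleton_self x)
    rw [← inner_conj_symm, h2, map_zero]

lemma finrank_VS (S : Finset (Fin N)) :
    Module.finrank ℂ (VS C S) = S.card := by
  classical
  have hli : LinearIndependent ℂ (fun i : (↑(Sᶜ) : Set (Fin N)) => eb C i) :=
    ((eb C).orthonormal.linearIndependent).comp _ Subtype.val_injective
  have hspan : Module.finrank ℂ (Submodule.span ℂ (eb C '' (↑(Sᶜ) : Set (Fin N))))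
      = Sᶜ.card := by
    have := finrank_span_eq_card hli
    rw [← Set.image_eq_range] at this
    rw [this]
    simp
    congr 1
    ext i
    simp
  have horth := Submodule.finrank_add_finrank_orthogonal
    (K := Submodule.span ℂ (eb C '' (↑(Sᶜ) : Set (Fin N))))
  rw [hspan, finrank_euclideanSpace_fin] at horth
  have hcard : Sᶜ.card = N - S.card := by
    rw [Finset.card_compl, Fintype.card_fin]
  have hle : S.card ≤ N := by
    have := Finset.card_le_univ S
    simpa [Fintype.card_fin] using this
  unfold VS
  omega
end Spectral

section Variational

variable (C : Matrix (Fin N) (Fin N) ℂ)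

/-- indices of the top `k+1` eigenvalues -/
noncomputable def Stop (k : Fin N) : Finset (Fin N) :=
  (Finset.Iic k).image (Tuple.sort (fun i => -(ev C i)))

/-- indices of the bottom `N - k` eigenvalues -/
noncomputable def Sbot (k : Fin N) : Finset (Fin N) :=
  (Finset.Ici k).image (Tuple.sort (fun i => -(ev C i)))

lemma card_Stop (k : Fin N) : (Stop C k).card = (k : ℕ) + 1 := by
  rw [Stop, Finset.card_image_of_injective _ (Tuple.sort _).injective, Fin.card_Iic]

lemma card_Sbot (k : Fin N) : (Sbot C k).card = N - (k : ℕ) := by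
  rw [Sbot, Finset.card_image_of_injective _ (Tuple.sort _).injective, Fin.card_Ici]

lemma ev_ge_of_mem_Stop {k : Fin N} {i : Fin N} (hi : i ∈ Stop C k) :
    evalsDesc C k ≤ ev C i := by
  rw [Stop, Finset.mem_image] at hi
  obtain ⟨j, hj, rfl⟩ := hi
  exact evalsDesc_antitone C (Finset.mem_Iic.mp hj)

lemma ev_le_of_mem_Sbot {k : Fin N} {i : Fin N} (hi : i ∈ Sbot C k) :
    ev C i ≤ evalsDesc C k := by
  rw [Sbot, Finset.mem_image] at hi
  obtain ⟨j, hj, rfl⟩ := hi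
  exact evalsDesc_antitone C (Finset.mem_Ici.mp hj)

lemma quad_ge_of_mem_VS_Stop {k : Fin N} {x : EuclideanSpace ℂ (Fin N)}
    (hx : x ∈ VS C (Stop C k)) :
    evalsDesc C k * ‖x‖ ^ 2 ≤ ‖toE (Cᴴ *ᵥ x)‖ ^ 2 := by
  rw [quad_eq, parseval C x, Finset.mul_sum]
  refine Finset.sum_le_sum fun j _ => ?_
  by_cases hj : j ∈ Stop C k
  · exact mul_le_mul_of_nonneg_right (ev_ge_of_mem_Stop C hj) (sq_nonneg _)
  · have h0 : (eb C).repr x j = 0 := by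
      rw [(eb C).repr_apply_apply]
      exact (mem_VS_iff C _ x).mp hx j hj
    rw [h0]
    simp

lemma norm_le_of_mem_VS_Sbot {k : Fin N} {x : EuclideanSpace ℂ (Fin N)}
    (hx : x ∈ VS C (Sbot C k)) :
    ‖toE (Cᴴ *ᵥ x)‖ ≤ svalsDesc C k * ‖x‖ := by
  have hq : ‖toE (Cᴴ *ᵥ x)‖ ^ 2 ≤ evalsDesc C k * ‖x‖ ^ 2 := by
    rw [quad_eq, parseval C x, Finset.mul_sum]
    refine Finset.sum_le_sum fun j _ => ?_
    by_cases hj : j ∈ Sbot C k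
    · exact mul_le_mul_of_nonneg_right (ev_le_of_mem_Sbot C hj) (sq_nonneg _)
    · have h0 : (eb C).repr x j = 0 := by
        rw [(eb C).repr_apply_apply]
        exact (mem_VS_iff C _ x).mp hx j hj
      rw [h0]
      simp
  calc ‖toE (Cᴴ *ᵥ x)‖ = Real.sqrt (‖toE (Cᴴ *ᵥ x)‖ ^ 2) :=
        (Real.sqrt_sq (norm_nonneg _)).symm
    _ ≤ Real.sqrt (evalsDesc C k * ‖x‖ ^ 2) := Real.sqrt_le_sqrt hq
    _ = svalsDesc C k * ‖x‖ := by
        rw [Real.sqrt_mul (evalsDesc_nonneg C k), Real.sqrt_sq (norm_nonneg _)]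
        rfl

/-- The key variational bound: if a subspace `V` with `finrank V + k ≥ N` witnesses
`‖Cᴴ x‖ ≤ c ‖x‖` on it, then the `k`-th singular value is at most `c`. -/
lemma svalsDesc_le_of_subspace (k : Fin N) (V : Submodule ℂ (EuclideanSpace ℂ (Fin N)))
    (hd : N ≤ Module.finrank ℂ V + (k : ℕ)) {c : ℝ} (hc : 0 ≤ c)
    (hb : ∀ x ∈ V, ‖toE (Cᴴ *ᵥ x)‖ ≤ c * ‖x‖) : svalsDesc C k ≤ c := by
  set W := VS C (Stop C k) with hW
  have hWrank : Module.finrank ℂ W = (k : ℕ) + 1 := by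
    rw [hW, finrank_VS, card_Stop]
  have hne : V ⊓ W ≠ ⊥ := by
    intro hbot
    have h1 := Submodule.finrank_sup_add_finrank_inf_eq V W
    rw [hbot, finrank_bot] at h1
    have h2 : Module.finrank ℂ ↥(V ⊔ W) ≤ N := by
      have := Submodule.finrank_le (V ⊔ W)
      rwa [finrank_euclideanSpace_fin] at this
    have hk : (k : ℕ) < N := k.isLt
    omega
  obtain ⟨x, hxVW, hx0⟩ := (Submodule.ne_bot_iff _).mp hne
  obtain ⟨hxV, hxW⟩ := hxVW
  have hq := quad_ge_of_mem_VS_Stop C hxW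
  have hb2 := hb x hxV
  have hb2' : ‖toE (Cᴴ *ᵥ x)‖ ^ 2 ≤ (c * ‖x‖) ^ 2 :=
    pow_le_pow_left₀ (norm_nonneg _) hb2 2
  have hxnorm : 0 < ‖x‖ := norm_pos_iff.mpr hx0
  have hev : evalsDesc C k ≤ c ^ 2 := by
    have := hq.trans hb2'
    rw [mul_pow] at this
    have hx2 : 0 < ‖x‖ ^ 2 := by positivity
    exact le_of_mul_le_mul_right (by linarith) hx2
  calc svalsDesc C k = Real.sqrt (evalsDesc C k) := rfl
    _ ≤ Real.sqrt (c ^ 2) := Real.sqrt_le_sqrt hev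
    _ = c := Real.sqrt_sq hc

end Variational

lemma svalsDesc_le_norm (C : Matrix (Fin N) (Fin N) ℂ) (k : Fin N) :
    svalsDesc C k ≤ ‖C‖ := by
  refine svalsDesc_le_of_subspace C k ⊤ ?_ (norm_nonneg C) ?_
  · rw [finrank_top, finrank_euclideanSpace_fin]
    omega
  · exact fun x _ => norm_mulVec_conjTranspose_le C x

/-- Weyl's inequality for singular values. -/
lemma weyl (P Q : Matrix (Fin N) (Fin N) ℂ) (k : Fin N) :
    svalsDesc (P + Q) k ≤ svalsDesc P k + ‖Q‖ := by
  refine svalsDesc_le_of_subspace (P + Q) k (VS P (Sbot P k)) ?_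
    (add_nonneg (svalsDesc_nonneg P k) (norm_nonneg Q)) ?_
  · rw [finrank_VS, card_Sbot]
    have := k.isLt
    omega
  · intro x hx
    have hsplit : toE ((P + Q)ᴴ *ᵥ x) = toE (Pᴴ *ᵥ x) + toE (Qᴴ *ᵥ x) := by
      ext i
      simp [toE, Matrix.conjTranspose_add, Matrix.add_mulVec]
    rw [hsplit]
    refine le_trans (norm_add_le _ _) ?_
    have h1 := norm_le_of_mem_VS_Sbot P hx
    have h2 := norm_mulVec_conjTranspose_le Q x
    linarith [h1, h2]

lemma allOnes_conjTranspose : (allOnes N)ᴴ = allOnes N := by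
  ext k l
  simp [allOnes, Matrix.conjTranspose_apply]

/-- Rank-one (all-ones) perturbation interlacing. -/
lemma rankone (P : Matrix (Fin N) (Fin N) ℂ) (c : ℂ) {j k : Fin N} (hkj : (k : ℕ) = (j : ℕ) + 1) :
    svalsDesc (P + c • allOnes N) k ≤ svalsDesc P j := by
  classical
  set f : EuclideanSpace ℂ (Fin N) →ₗ[ℂ] ℂ :=
    { toFun := fun x => ∑ l, x l
      map_add' := fun x y => by simp [Finset.sum_add_distrib]
      map_smul' := fun a x => by simp [Finset.mul_sum] } with hf
  refine svalsDesc_le_of_subspace _ k (VS P (Sbot P j) ⊓ LinearMap.ker f) ?_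
    (svalsDesc_nonneg P j) ?_
  · have h1 := Submodule.finrank_sup_add_finrank_inf_eq (VS P (Sbot P j)) (LinearMap.ker f)
    have h2 : Module.finrank ℂ ↥(VS P (Sbot P j) ⊔ LinearMap.ker f) ≤ N := by
      have := Submodule.finrank_le (VS P (Sbot P j) ⊔ LinearMap.ker f)
      rwa [finrank_euclideanSpace_fin] at this
    have h3 := LinearMap.finrank_range_add_finrank_ker f
    rw [finrank_euclideanSpace_fin] at h3
    have h4 : Module.finrank ℂ (LinearMap.range f) ≤ 1 := by
      have := Submodule.finrank_le (LinearMap.range f)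
      rwa [Module.finrank_self] at this
    have h5 : Module.finrank ℂ (VS P (Sbot P j)) = N - (j : ℕ) := by
      rw [finrank_VS, card_Sbot]
    have hj := j.isLt
    omega
  · intro x hx
    obtain ⟨hx1, hx2⟩ := hx
    have hker : f x = 0 := hx2
    have hJ : (c • allOnes N)ᴴ *ᵥ (x : Fin N → ℂ) = 0 := by
      funext i
      simp only [Matrix.conjTranspose_smul, allOnes_conjTranspose, Matrix.smul_mulVec,
        Pi.smul_apply]
      have : (allOnes N *ᵥ (x : Fin N → ℂ)) i = ∑ l, x l := by
        simp [allOnes, mulVec, dotProduct]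
      rw [this]
      have : (∑ l, x l : ℂ) = 0 := hker
      rw [this]
      simp
    have hsplit : toE ((P + c • allOnes N)ᴴ *ᵥ x) = toE (Pᴴ *ᵥ x) := by
      ext i
      simp only [toE, WithLp.equiv_symm_apply, PiLp.toLp_apply, Matrix.conjTranspose_add, Matrix.add_mulVec]
      rw [show ((c • allOnes N)ᴴ *ᵥ (x : Fin N → ℂ)) = 0 from hJ]
      simp
    rw [hsplit]
    exact norm_le_of_mem_VS_Sbot P hx1

/-- `evalsDesc` only depends on `A` through `A * Aᴴ`. -/
lemma evalsDesc_congr {A B : Matrix (Fin N) (Fin N) ℂ} (h : A * Aᴴ = B * Bᴴ) :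
    evalsDesc A = evalsDesc B := by
  have key : ∀ (M₁ M₂ : Matrix (Fin N) (Fin N) ℂ) (h₁ : M₁.IsHermitian) (h₂ : M₂.IsHermitian),
      M₁ = M₂ → h₁.eigenvalues = h₂.eigenvalues := by
    rintro M₁ M₂ h₁ h₂ rfl
    rfl
  unfold evalsDesc
  rw [key _ _ (Matrix.isHermitian_mul_conjTranspose_self A)
    (Matrix.isHermitian_mul_conjTranspose_self B) h]

lemma svalsDesc_I_smul (A : Matrix (Fin N) (Fin N) ℂ) :
    svalsDesc (Complex.I • A) = svalsDesc A := by
  unfold svalsDesc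
  rw [evalsDesc_congr (A := Complex.I • A) (B := A) ?_]
  rw [Matrix.conjTranspose_smul, Matrix.smul_mul, Matrix.mul_smul, smul_smul]
  rw [show (star Complex.I : ℂ) = -Complex.I from Complex.conj_I]
  simp [Complex.I_mul_I]


/-- for `A ∈ M_N(ℂ)` and `0 < γ < 1`, with `X = exp_∘(iγA)`,
`(1/N) Σ_{k=2}^N |σ_k(X/γ) − σ_k(A)| ≤ γ exp(‖A‖) + 2‖A‖/N`.  (The sum runs over all
indices except the first, i.e. over 0-based indices `k` with `0 < k`.) -/
theorem average_abs_svals_tail_entrywiseExp {N : ℕ}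
    (A : Matrix (Fin N) (Fin N) ℂ) (γ : ℝ) (hγ0 : 0 < γ) (hγ1 : γ < 1) :
    (1 / (N : ℝ)) *
        ∑ k ∈ Finset.univ.filter (fun k : Fin N => 0 < (k : ℕ)),
          |svalsDesc (((γ : ℂ))⁻¹ • entrywiseExp ((Complex.I * (γ : ℂ)) • A)) k
            - svalsDesc A k|
      ≤ γ * Real.exp (opNorm A) + 2 * opNorm A / (N : ℝ) := by
  have hop : opNorm A = ‖A‖ := rfl
  rw [hop]
  rcases Nat.eq_zero_or_pos N with hN | hN
  · subst hN
    simp only [Finset.univ_eq_empty, Finset.filter_empty, Finset.sum_empty, mul_zero,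
      Nat.cast_zero, div_zero]
    positivity
  have hNpos : (0:ℝ) < N := by exact_mod_cast hN
  have hγc : (γ : ℂ) ≠ 0 := by exact_mod_cast ne_of_gt hγ0
  set X := entrywiseExp ((Complex.I * (γ : ℂ)) • A) with hX
  set M := ((γ : ℂ))⁻¹ • X with hM
  set B := Complex.I • A + ((γ : ℂ))⁻¹ • allOnes N with hB
  set E := M - B with hEdef
  -- the error bound
  have hE : ‖E‖ ≤ γ * Real.exp ‖A‖ := by
    have hscale : (γ : ℂ) • E = X - allOnes N - (Complex.I * (γ : ℂ)) • A := by
      rw [hEdef, hM, hB]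
      simp only [smul_sub, smul_add, smul_smul, mul_inv_cancel₀ hγc, one_smul]
      rw [show (γ : ℂ) * Complex.I = Complex.I * (γ : ℂ) from mul_comm _ _]
      abel
    have hsb := series_bound A γ hγ0 hγ1
    rw [← hX, ← hscale] at hsb
    have hnorm : ‖(γ : ℂ) • E‖ = γ * ‖E‖ := by
      rw [norm_smul, Complex.norm_real, Real.norm_of_nonneg hγ0.le]
    rw [hnorm] at hsb
    calc ‖E‖ ≤ γ ^ 2 * Real.exp ‖A‖ / γ := by
          rw [le_div_iff₀ hγ0]
          linarith [hsb]
      _ = γ * Real.exp ‖A‖ := by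
          field_simp
  have hE0 : 0 ≤ ‖E‖ := norm_nonneg E
  -- extended singular values
  set s : ℕ → ℝ := fun n => if h : n < N then svalsDesc A ⟨n, h⟩ else 0 with hs
  have hs_nonneg : ∀ n, 0 ≤ s n := by
    intro n
    simp only [hs]
    split
    · exact svalsDesc_nonneg A _
    · exact le_refl 0
  have hs_le : ∀ n, s n ≤ ‖A‖ := by
    intro n
    simp only [hs]
    split
    · exact svalsDesc_le_norm A _
    · exact norm_nonneg A
  have hs_anti : ∀ n, s (n + 1) ≤ s n := by
    intro n
    simp only [hs]
    split
    · next h1 =>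
      split
      · next h2 => exact svalsDesc_antitone (A := A) (by exact Fin.mk_le_mk.mpr (by omega))
      · next h2 => omega
    · next h1 =>
      split
      · next h2 => exact svalsDesc_nonneg A _
      · exact le_refl 0
  -- per-term bound
  have hterm : ∀ k : Fin N, 0 < (k : ℕ) →
      |svalsDesc M k - svalsDesc A k| ≤ ‖E‖ + (s ((k : ℕ) - 1) - s ((k : ℕ) + 1)) := by
    intro k hk
    have hkN : (k : ℕ) < N := k.isLt
    set j : Fin N := ⟨(k : ℕ) - 1, by omega⟩ with hj
    have hkj : (k : ℕ) = (j : ℕ) + 1 := by simp [hj]; omega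
    have hsk : svalsDesc A k = s (k : ℕ) := by simp only [hs]; rw [dif_pos hkN]
    have hsj : svalsDesc A j = s ((k : ℕ) - 1) := by
      simp only [hs]; rw [dif_pos (show (k:ℕ) - 1 < N by omega)]
    -- h1 : svals M k ≤ svals B k + ‖E‖
    have h1 : svalsDesc M k ≤ svalsDesc B k + ‖E‖ := by
      have := weyl B E k
      rwa [show B + E = M by rw [hEdef]; abel] at this
    -- h2 : svals B k ≤ s (k-1)
    have h2 : svalsDesc B k ≤ s ((k : ℕ) - 1) := by
      have := rankone (Complex.I • A) ((γ : ℂ))⁻¹ hkj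
      rw [← hB, svalsDesc_I_smul] at this
      rwa [hsj] at this
    -- h4 : svals B k ≤ svals M k + ‖E‖
    have h4 : svalsDesc B k ≤ svalsDesc M k + ‖E‖ := by
      have := weyl M (-E) k
      rwa [show M + -E = B by rw [hEdef]; abel, norm_neg] at this
    -- h3 : s (k+1) ≤ svals B k
    have h3 : s ((k : ℕ) + 1) ≤ svalsDesc B k := by
      by_cases hk1 : (k : ℕ) + 1 < N
      · set k1 : Fin N := ⟨(k : ℕ) + 1, hk1⟩ with hk1def
        have heq : B + (-((γ : ℂ))⁻¹) • allOnes N = Complex.I • A := by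
          rw [hB, neg_smul]
          abel
        have := rankone B (-((γ : ℂ))⁻¹) (j := k) (k := k1) (by simp [hk1def])
        rw [heq, svalsDesc_I_smul] at this
        have hs1 : svalsDesc A k1 = s ((k : ℕ) + 1) := by
          simp only [hs]; rw [dif_pos hk1]
        rwa [hs1] at this
      · have : s ((k : ℕ) + 1) = 0 := by simp only [hs]; rw [dif_neg hk1]
        rw [this]
        exact svalsDesc_nonneg B k
    have hmono : s (k : ℕ) ≤ s ((k : ℕ) - 1) := by
      have := hs_anti ((k : ℕ) - 1)
      rwa [show (k : ℕ) - 1 + 1 = (k : ℕ) by omega] at this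
    have hmono2 : s ((k : ℕ) + 1) ≤ s (k : ℕ) := hs_anti _
    rw [abs_sub_le_iff]
    constructor
    · rw [hsk]; linarith
    · rw [hsk]; linarith
  -- sum up
  set F := Finset.univ.filter (fun k : Fin N => 0 < (k : ℕ)) with hF
  have hsum1 : ∑ k ∈ F, |svalsDesc M k - svalsDesc A k|
      ≤ ∑ k ∈ F, (‖E‖ + (s ((k : ℕ) - 1) - s ((k : ℕ) + 1))) := by
    refine Finset.sum_le_sum fun k hkF => ?_
    exact hterm k (Finset.mem_filter.mp hkF).2
  have hsum2 : ∑ k ∈ F, (‖E‖ + (s ((k : ℕ) - 1) - s ((k : ℕ) + 1)))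
      = F.card * ‖E‖ + ∑ k ∈ F, (s ((k : ℕ) - 1) - s ((k : ℕ) + 1)) := by
    rw [Finset.sum_add_distrib, Finset.sum_const, nsmul_eq_mul]
  -- reindex the telescoping sum
  have hre : ∑ k ∈ F, (s ((k : ℕ) - 1) - s ((k : ℕ) + 1))
      = ∑ n ∈ Finset.Ico 1 N, (s (n - 1) - s (n + 1)) := by
    refine Finset.sum_bij' (fun k _ => (k : ℕ)) (fun n hn => ⟨n, (Finset.mem_Ico.mp hn).2⟩)
      ?_ ?_ ?_ ?_ ?_
    · intro k hkF
      rw [Finset.mem_Ico]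
      exact ⟨(Finset.mem_filter.mp hkF).2, k.isLt⟩
    · intro n hn
      rw [hF, Finset.mem_filter]
      exact ⟨Finset.mem_univ _, (Finset.mem_Ico.mp hn).1⟩
    · intro k _; exact Fin.ext rfl
    · intro n _; rfl
    · intro k _; rfl
  have htel : ∑ n ∈ Finset.Ico 1 N, (s (n - 1) - s (n + 1)) ≤ 2 * ‖A‖ := by
    rw [Finset.sum_Ico_eq_sum_range]
    have hcongr : ∀ i ∈ Finset.range (N - 1),
        s (1 + i - 1) - s (1 + i + 1) = (s i - s (i + 1)) + (s (i + 1) - s (i + 2)) := by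
      intro i _
      rw [show 1 + i - 1 = i by omega, show 1 + i + 1 = i + 2 by omega]
      ring
    rw [Finset.sum_congr rfl hcongr, Finset.sum_add_distrib]
    rw [Finset.sum_range_sub' (fun i => s i), Finset.sum_range_sub' (fun i => s (i + 1))]
    have := hs_nonneg (N - 1)
    have := hs_nonneg (N - 1 + 1)
    have := hs_le 0
    have := hs_le 1
    linarith
  have hcard : (F.card : ℝ) ≤ N := by
    exact_mod_cast (Finset.card_le_univ F).trans_eq (by simp)
  calc (1 / (N : ℝ)) * ∑ k ∈ F, |svalsDesc M k - svalsDesc A k|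
      ≤ (1 / (N : ℝ)) * (F.card * ‖E‖ + 2 * ‖A‖) := by
        refine mul_le_mul_of_nonneg_left ?_ (by positivity)
        rw [hsum2] at hsum1
        rw [hre] at hsum1
        linarith
    _ ≤ (1 / (N : ℝ)) * ((N : ℝ) * ‖E‖ + 2 * ‖A‖) := by
        refine mul_le_mul_of_nonneg_left ?_ (by positivity)
        have := mul_le_mul_of_nonneg_right hcard hE0
        linarith
    _ = ‖E‖ + 2 * ‖A‖ / N := by
        field_simp
    _ ≤ γ * Real.exp ‖A‖ + 2 * ‖A‖ / N := by linarith
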